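/- For any quantum channel Λ on a d-dimensional Hilbert space with Kraus operators {A_k} (so Λ(ρ) = Σ_k A_k ρ A_k†), the operator N = Σ_k A_k ⊗ A_k† satisfies ‖N‖₂ ≤ d, where ‖·‖₂ is the Frobenius (Hilbert–Schmidt) norm. -/

import Mathlib

open Matrix Kronecker

/-- Frobenius (Hilbert–Schmidt) norm of a complex matrix. -/
noncomputable def frobNorm {n : Type*} [Fintype n] (M : Matrix n n ℂ) : ℝ :=
  Real.sqrt (∑ i, ∑ j, ‖M i j‖ ^ 2)

lemma frob_aux_kron_conjT {l m n p : Type*} [Fintype l] [Fintype m] [Fintype n] [Fintype p]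
    (A : Matrix l m ℂ) (B : Matrix n p ℂ) : (A ⊗ₖ B)ᴴ = Aᴴ ⊗ₖ Bᴴ := by
  ext ⟨i1, i2⟩ ⟨j1, j2⟩
  simp [conjTranspose_apply, kroneckerMap_apply, mul_comm]

lemma frob_aux_sq {n : Type*} [Fintype n] (M : Matrix n n ℂ) :
    ∑ i, ∑ j, ‖M i j‖ ^ 2 = (trace (Mᴴ * M)).re := by
  simp only [trace, Matrix.mul_apply, diag, conjTranspose_apply, Complex.re_sum]
  rw [Finset.sum_comm]
  refine Finset.sum_congr rfl fun i _ => Finset.sum_congr rfl fun j _ => ?_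
  rw [Complex.sq_norm]
  simp [Complex.star_def, ← Complex.normSq_eq_conj_mul_self]

/-- For a quantum channel `Λ(ρ) = ∑ k, A k * ρ * (A k)ᴴ` on a `d`-dimensional space
(so `∑ k, (A k)ᴴ * A k = 1`), the operator `N = ∑ k, A k ⊗ (A k)ᴴ` satisfies
`‖N‖₂ ≤ d`. -/
theorem frobNorm_sum_kronecker_le {d : ℕ} {ι : Type*} [Fintype ι]
    (A : ι → Matrix (Fin d) (Fin d) ℂ)
    (hKraus : ∑ k, (A k)ᴴ * A k = (1 : Matrix (Fin d) (Fin d) ℂ)) :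
    frobNorm (∑ k, (A k) ⊗ₖ (A k)ᴴ) ≤ (d : ℝ) := by
  set N : Matrix (Fin d × Fin d) (Fin d × Fin d) ℂ := ∑ k, (A k) ⊗ₖ (A k)ᴴ with hN
  set G : ι → ι → ℂ := fun k l => trace ((A k)ᴴ * A l) with hG
  -- Step 1: trace (Nᴴ * N) = ∑ k, ∑ l, G k l * conj (G k l)
  have hNH : Nᴴ = ∑ k, (A k)ᴴ ⊗ₖ (A k) := by
    rw [hN, conjTranspose_sum]
    refine Finset.sum_congr rfl fun k _ => ?_
    rw [frob_aux_kron_conjT, conjTranspose_conjTranspose]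
  have htr : trace (Nᴴ * N) = ∑ k, ∑ l, G k l * (starRingEnd ℂ) (G k l) := by
    rw [hNH, hN, Finset.sum_mul_sum]
    rw [trace_sum]
    refine Finset.sum_congr rfl fun k _ => ?_
    rw [trace_sum]
    refine Finset.sum_congr rfl fun l _ => ?_
    rw [← mul_kronecker_mul, trace_kronecker]
    congr 1
    have : (starRingEnd ℂ) (G k l) = trace (((A k)ᴴ * A l)ᴴ) := by
      rw [trace_conjTranspose]; rfl
    rw [this, conjTranspose_mul, conjTranspose_conjTranspose, trace_mul_comm]
  -- Step 2: Cauchy-Schwarz via EuclideanSpace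
  set v : ι → EuclideanSpace ℂ (Fin d × Fin d) := fun k => WithLp.toLp 2 (fun p : Fin d × Fin d => A k p.1 p.2) with hv
  have hGinner : ∀ k l, G k l = inner ℂ (v k) (v l) := by
    intro k l
    rw [PiLp.inner_apply]
    simp only [hG, trace, Matrix.mul_apply, diag, conjTranspose_apply]
    rw [Fintype.sum_prod_type, Finset.sum_comm]
    simp [hv, Complex.star_def, mul_comm]
  have hnormsq : ∀ k, ‖v k‖ ^ 2 = (G k k).re := by
    intro k
    rw [hGinner, ← inner_self_eq_norm_sq (𝕜 := ℂ)]; rfl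
  have hsumnorm : ∑ k, ‖v k‖ ^ 2 = (d : ℝ) := by
    have : ∑ k, G k k = trace (1 : Matrix (Fin d) (Fin d) ℂ) := by
      rw [← hKraus, trace_sum]
    simp only [hnormsq]
    rw [← Complex.re_sum, this, trace_one]
    simp
  have key : (trace (Nᴴ * N)).re ≤ (d : ℝ) ^ 2 := by
    rw [htr]
    have : (∑ k, ∑ l, G k l * (starRingEnd ℂ) (G k l)).re
        = ∑ k, ∑ l, ‖G k l‖ ^ 2 := by
      rw [Complex.re_sum]
      refine Finset.sum_congr rfl fun k _ => ?_
      rw [Complex.re_sum]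
      refine Finset.sum_congr rfl fun l _ => ?_
      rw [Complex.mul_conj, Complex.sq_norm]
      simp
    rw [this, ← hsumnorm, sq, Finset.sum_mul_sum]
    refine Finset.sum_le_sum fun k _ => Finset.sum_le_sum fun l _ => ?_
    have h1 : ‖G k l‖ ≤ ‖v k‖ * ‖v l‖ := by
      rw [hGinner]
      exact norm_inner_le_norm (𝕜 := ℂ) _ _
    calc ‖G k l‖ ^ 2 ≤ (‖v k‖ * ‖v l‖) ^ 2 := by
          apply pow_le_pow_left₀ (norm_nonneg _) h1
      _ = ‖v k‖ ^ 2 * ‖v l‖ ^ 2 := by ring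
  -- conclude
  rw [frobNorm, frob_aux_sq]
  calc Real.sqrt (trace (Nᴴ * N)).re ≤ Real.sqrt ((d : ℝ) ^ 2) :=
        Real.sqrt_le_sqrt key
    _ = (d : ℝ) := by rw [Real.sqrt_sq (by positivity)]
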